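/- Assume K = k_i + k_j = 3. Then the classes modulo B of the cocycles (0, x⁻¹) and (0, x⁻²) form a basis of the ℂ-vector space V/B; in particular dim_ℂ V/B = 2. -/

import Mathlib

noncomputable section

open LaurentPolynomial

/-- `L = ℂ[x, x⁻¹]`, the Laurent polynomials over `ℂ`. -/
abbrev L : Type := LaurentPolynomial ℂ

/-- The coefficient of `x^n` in a Laurent polynomial. -/
def coeffL (p : L) (n : ℤ) : ℂ := (AddMonoidAlgebra.coeff p : ℤ →₀ ℂ) n

lemma coeffL_zero (n : ℤ) : coeffL 0 n = 0 := rfl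

lemma coeffL_add (a b : L) (n : ℤ) : coeffL (a + b) n = coeffL a n + coeffL b n := by
  unfold coeffL; erw [Finsupp.add_apply]; rfl

lemma coeffL_smul (c : ℂ) (a : L) (n : ℤ) : coeffL (c • a) n = c * coeffL a n := by
  unfold coeffL; erw [Finsupp.smul_apply]; rfl

/-- `L₊`: Laurent polynomials involving only nonnegative powers of `x`. -/
def Lplus : Submodule ℂ L where
  carrier := {p | ∀ n : ℤ, n < 0 → coeffL p n = 0}
  zero_mem' := fun n _ => coeffL_zero n
  add_mem' := by intro a b ha hb n hn; rw [coeffL_add, ha n hn, hb n hn, add_zero]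
  smul_mem' := by intro c p hp n hn; rw [coeffL_smul, hp n hn, mul_zero]

/-- `L₋`: Laurent polynomials involving only nonpositive powers of `x`. -/
def Lminus : Submodule ℂ L where
  carrier := {p | ∀ n : ℤ, 0 < n → coeffL p n = 0}
  zero_mem' := fun n _ => coeffL_zero n
  add_mem' := by intro a b ha hb n hn; rw [coeffL_add, ha n hn, hb n hn, add_zero]
  smul_mem' := by intro c p hp n hn; rw [coeffL_smul, hp n hn, mul_zero]

/-- The derivative `d/dx` on Laurent polynomials. -/
def D (p : L) : L := Finsupp.sum (AddMonoidAlgebra.coeff p : ℤ →₀ ℂ) fun n a => ((n : ℂ) * a) • T (n - 1)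

/-- `V = L × L`, the model of Čech 1-cochains with values in `T₂^{ij}`:
a pair `(a, b)` encodes `a(x)ξᵢξⱼ∂/∂x + b(x)ξᵢξⱼξₗ∂/∂ξₗ` on `U₀ ∩ U₁`. -/
abbrev V : Type := L × L

/-- `B₀ = L₊ × L₊`: cochains holomorphic in `U₀`. -/
def B0 : Submodule ℂ V := Lplus.prod Lplus

/-- `B₁`: cochains holomorphic in `U₁`, i.e. pairs `(a, b)` with
`x^(K-2)·a ∈ L₋` and `x^K·(b - kl·x⁻¹·a) ∈ L₋`. -/
def B1 (K kl : ℤ) : Submodule ℂ V :=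
  Lminus.comap ((LinearMap.mulLeft ℂ (T (K - 2))).comp (LinearMap.fst ℂ L L)) ⊓
  Lminus.comap ((LinearMap.mulLeft ℂ (T K)).comp
    (LinearMap.snd ℂ L L - (kl : ℂ) • (LinearMap.mulLeft ℂ (T (-1))).comp (LinearMap.fst ℂ L L)))

/-- The coboundary subspace `B = B₀ + B₁`. -/
def B (K kl : ℤ) : Submodule ℂ V := B0 ⊔ B1 K kl

/-- Action of `e = ∂/∂x` on cocycles: `E(a, b) = (a′, b′)`. -/
def Eop : V → V := fun p => (D p.1, D p.2)

/-- Action of `f = ∂/∂y` on cocycles: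
`F(a, b) = ((2−K)·x·a − x²·a′, kl·a − K·x·b − x²·b′)`. -/
def Fop (K kl : ℤ) : V → V := fun p =>
  (((2 - K : ℤ) : ℂ) • (T 1 * p.1) - T 2 * D p.1,
   (kl : ℂ) • p.1 - (K : ℂ) • (T 1 * p.2) - T 2 * D p.2)


lemma coeffL_sub (a b : L) (n : ℤ) : coeffL (a - b) n = coeffL a n - coeffL b n := by
  unfold coeffL; erw [AddMonoidAlgebra.coeff_sub, Finsupp.sub_apply]

lemma coeffL_T_mul (m : ℤ) (p : L) (n : ℤ) : coeffL (T m * p) n = coeffL p (n - m) := by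
  unfold coeffL
  erw [AddMonoidAlgebra.coeff_single_mul_apply]
  rw [one_mul]; congr 1; ring

lemma coeffL_T (m n : ℤ) : coeffL (T m) n = if m = n then 1 else 0 := by
  unfold coeffL; exact T_apply n m

/-- Negative-degree part of a Laurent polynomial. -/
def negp (p : L) : L := AddMonoidAlgebra.ofCoeff (Finsupp.filter (fun n => n < 0) (AddMonoidAlgebra.coeff p))

lemma coeffL_negp (p : L) (n : ℤ) : coeffL (negp p) n = if n < 0 then coeffL p n else 0 := by
  unfold coeffL negp; erw [AddMonoidAlgebra.coeff_ofCoeff, Finsupp.filter_apply]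

lemma mem_Lplus {p : L} : p ∈ Lplus ↔ ∀ n : ℤ, n < 0 → coeffL p n = 0 := Iff.rfl
lemma mem_Lminus {p : L} : p ∈ Lminus ↔ ∀ n : ℤ, 0 < n → coeffL p n = 0 := Iff.rfl

lemma mem_B1 {K kl : ℤ} {a b : L} : (a, b) ∈ B1 K kl ↔
    (T (K - 2) * a ∈ Lminus ∧ T K * (b - (kl : ℂ) • (T (-1) * a)) ∈ Lminus) := by
  simp [B1, Submodule.mem_comap, LinearMap.mulLeft_apply, LinearMap.sub_apply,
    LinearMap.smul_apply]

/-- The linear functional cutting out `B` when `K = 3`. -/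
def phi (kl : ℤ) : V →ₗ[ℂ] (Fin 2 → ℂ) where
  toFun p := ![coeffL p.2 (-1), coeffL p.2 (-2) - kl * coeffL p.1 (-1)]
  map_add' p q := by
    funext i
    fin_cases i <;> simp [coeffL_add] <;> ring
  map_smul' c p := by
    funext i
    fin_cases i <;> simp [coeffL_smul] <;> ring

lemma B_eq_ker (kl : ℤ) : B 3 kl = LinearMap.ker (phi kl) := by
  apply le_antisymm
  · rw [B]
    apply sup_le
    · rintro ⟨a, b⟩ ⟨ha, hb⟩
      rw [LinearMap.mem_ker]
      funext i
      fin_cases i <;>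
        simp [phi, hb (-1) (by norm_num), hb (-2) (by norm_num), ha (-1) (by norm_num)]
    · rintro ⟨a, b⟩ hab
      rw [mem_B1] at hab
      obtain ⟨h1, h2⟩ := hab
      rw [mem_Lminus] at h1 h2
      have ha0 : coeffL a 0 = 0 := by
        have := h1 1 (by norm_num)
        rwa [coeffL_T_mul] at this
      have hb1 : coeffL b (-1) = 0 := by
        have := h2 2 (by norm_num)
        rw [coeffL_T_mul, coeffL_sub, coeffL_smul, coeffL_T_mul] at this
        norm_num [ha0] at this
        exact this
      have hb2 : coeffL b (-2) = (kl : ℂ) * coeffL a (-1) := by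
        have := h2 1 (by norm_num)
        rw [coeffL_T_mul, coeffL_sub, coeffL_smul, coeffL_T_mul] at this
        norm_num at this
        linear_combination this
      rw [LinearMap.mem_ker]
      funext i
      fin_cases i <;> simp [phi, hb1, hb2]
  · rintro ⟨a, b⟩ hab
    rw [LinearMap.mem_ker] at hab
    have hb1 : coeffL b (-1) = 0 := by
      have := congrFun hab 0
      simpa [phi] using this
    have hb2 : coeffL b (-2) - (kl : ℂ) * coeffL a (-1) = 0 := by
      have := congrFun hab 1
      simpa [phi] using this
    rw [B, Submodule.mem_sup]
    refine ⟨(a - negp a, b - negp b), ?_, (negp a, negp b), ?_, by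
      simp [Prod.ext_iff]⟩
    · constructor <;> · intro n hn; rw [coeffL_sub, coeffL_negp, if_pos hn, sub_self]
    · rw [mem_B1]
      constructor <;> rw [mem_Lminus] <;> intro n hn
      · rw [coeffL_T_mul, coeffL_negp, if_neg (by omega)]
      · rw [coeffL_T_mul, coeffL_sub, coeffL_smul, coeffL_T_mul]
        have h3 : n = 1 ∨ n = 2 ∨ 3 ≤ n := by omega
        rcases h3 with h | h | h
        · subst h
          norm_num [coeffL_negp, hb1]
          linear_combination hb2
        · subst h
          norm_num [coeffL_negp, hb1]
        · rw [coeffL_negp, if_neg (by omega), coeffL_negp, if_neg (by omega)]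
          ring

/-- Inverse map for the induced quotient map. -/
def sigma (kl : ℤ) : (Fin 2 → ℂ) →ₗ[ℂ] (V ⧸ B 3 kl) :=
  (B 3 kl).mkQ.comp
    ((LinearMap.toSpanSingleton ℂ V ((0 : L), T (-1))).comp (LinearMap.proj 0) +
     (LinearMap.toSpanSingleton ℂ V ((0 : L), T (-2))).comp (LinearMap.proj 1))

lemma phi_single (kl : ℤ) (c0 c1 : ℂ) :
    phi kl (c0 • ((0 : L), T (-1)) + c1 • ((0 : L), T (-2))) = ![c0, c1] := by
  funext i
  fin_cases i <;>
    simp [phi, coeffL_add, coeffL_smul, coeffL_T, coeffL_zero] <;> norm_num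

def quotEquiv (kl : ℤ) : (V ⧸ B 3 kl) ≃ₗ[ℂ] (Fin 2 → ℂ) := by
  refine LinearEquiv.ofLinear ((B 3 kl).liftQ (phi kl) (le_of_eq (B_eq_ker kl)))
    (sigma kl) ?_ ?_
  · refine LinearMap.ext fun c => ?_
    have : (B 3 kl).liftQ (phi kl) (le_of_eq (B_eq_ker kl)) (sigma kl c)
        = phi kl (c 0 • ((0 : L), T (-1)) + c 1 • ((0 : L), T (-2))) := by
      simp [sigma]
    rw [LinearMap.comp_apply, this, phi_single]
    funext i
    fin_cases i <;> simp
  · apply Submodule.linearMap_qext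
    refine LinearMap.ext fun v => ?_
    simp only [LinearMap.comp_apply, Submodule.mkQ_apply, Submodule.liftQ_apply,
      LinearMap.id_apply]
    have : sigma kl (phi kl v)
        = Submodule.mkQ _ ((phi kl v 0) • ((0 : L), T (-1)) + (phi kl v 1) • ((0 : L), T (-2))) := by
      simp [sigma]
    rw [this]
    rw [Submodule.mkQ_apply, Submodule.Quotient.eq, B_eq_ker,
      LinearMap.mem_ker, map_sub, phi_single, sub_eq_zero]
    funext i
    fin_cases i <;> simp

lemma quotEquiv_mk (kl : ℤ) (v : V) :
    quotEquiv kl (Submodule.Quotient.mk v) = phi kl v := rfl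

/-- If `K = kᵢ + kⱼ = 3`, the classes mod `B` of the cocycles `(0, x⁻¹)` and
`(0, x⁻²)` form a basis of `V/B`; in particular `dim_ℂ V/B = 2`. -/
theorem stmt_1 (ki kj kl K : ℤ) (hK : K = ki + kj) (hK3 : K = 3) :
    (∃ bas : Module.Basis (Fin 2) ℂ (V ⧸ B K kl),
      bas 0 = Submodule.Quotient.mk ((0, T (-1)) : V) ∧
      bas 1 = Submodule.Quotient.mk ((0, T (-2)) : V)) ∧
    Module.finrank ℂ (V ⧸ B K kl) = 2 := by
  subst hK3
  set e := quotEquiv kl with he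
  refine ⟨⟨Module.Basis.ofEquivFun e, ?_, ?_⟩, ?_⟩
  · rw [Module.Basis.coe_ofEquivFun]
    rw [LinearEquiv.symm_apply_eq, quotEquiv_mk]
    funext i
    fin_cases i <;> simp [phi, coeffL_T, coeffL_zero] <;> norm_num
  · rw [Module.Basis.coe_ofEquivFun]
    rw [LinearEquiv.symm_apply_eq, quotEquiv_mk]
    funext i
    fin_cases i <;> simp [phi, coeffL_T, coeffL_zero] <;> norm_num
  · rw [e.finrank_eq]
    simp
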